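/- Let R = ℂ[x,y,z,u,v,w,t] and let f = x² + u·y² + 2v·y·z + w·z² + (u·w − v²)·t². Define the 4×4 matrices over R: Φ with rows (x−vt, y, z, t), (−uy−2zv, x+vt, −ut, z), (−wz, wt, x−vt, −y), (−uwt, −wz, uy+2vz, x+vt), and Φ⁺ with rows (x+vt, −y, −z, −t), (uy+2zv, x−vt, ut, −z), (wz, −wt, x+vt, y), (uwt, wz, −uy−2vz, x−vt). Then Φ·Φ⁺ = f·I₄ and Φ⁺·Φ = f·I₄. -/
import Mathlib


noncomputable section
open MvPolynomial

abbrev R0 : Type := MvPolynomial (Fin 7) ℂ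

def px : R0 := X 0
def py : R0 := X 1
def pz : R0 := X 2
def pu : R0 := X 3
def pv : R0 := X 4
def pw : R0 := X 5
def pt : R0 := X 6

def f0 : R0 := px^2 + pu*py^2 + 2*pv*py*pz + pw*pz^2 + (pu*pw - pv^2)*pt^2

def Phi : Matrix (Fin 4) (Fin 4) R0 :=
  !![px - pv*pt, py, pz, pt;
     -pu*py - 2*pz*pv, px + pv*pt, -pu*pt, pz;
     -pw*pz, pw*pt, px - pv*pt, -py;
     -pu*pw*pt, -pw*pz, pu*py + 2*pv*pz, px + pv*pt]

def PhiP : Matrix (Fin 4) (Fin 4) R0 :=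
  !![px + pv*pt, -py, -pz, -pt;
     pu*py + 2*pz*pv, px - pv*pt, pu*pt, -pz;
     pw*pz, -pw*pt, px + pv*pt, py;
     pu*pw*pt, pw*pz, -pu*py - 2*pv*pz, px - pv*pt]

set_option maxHeartbeats 2000000 in
/-- The Curto–Morrison matrix factorisation of the universal flop of length 2:
`Φ·Φ⁺ = f·I₄` and `Φ⁺·Φ = f·I₄`. -/
theorem phi_mul_phiPlus :
    Phi * PhiP = f0 • (1 : Matrix (Fin 4) (Fin 4) R0) ∧
    PhiP * Phi = f0 • (1 : Matrix (Fin 4) (Fin 4) R0) := by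
  constructor <;>
  · refine Matrix.ext fun i j => ?_
    fin_cases i <;> fin_cases j <;>
      simp [Phi, PhiP, f0, Matrix.mul_apply, Fin.sum_univ_four, Matrix.one_apply] <;> ring

end
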